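/- arXiv:1407.2674 — 5 statements merged into one kernel-verified Lean document; each statement's English description precedes it below -/
import Mathlib

section
/- For a concept class C over domain X, VC(C) ≤ VC(C^label) ≤ 2·VC(C), where C^label = {c^label : c ∈ C} is the class over X × {0,1} defined by c^label(x, y) = 1 iff c(x) ≠ y. -/
/-- A concept class `C` shatters a finite set `B` if every dichotomy of `B` is
realized by some concept in `C`. -/
def Shatters {X : Type*} (C : Set (X → Bool)) (B : Finset X) : Prop :=
  ∀ g : X → Bool, ∃ c ∈ C, ∀ x ∈ B, c x = g x

/-- The VC dimension of a concept class: the supremum of cardinalities of shattered sets. -/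
noncomputable def vcDim {X : Type*} (C : Set (X → Bool)) : ℕ∞ :=
  ⨆ B ∈ {B : Finset X | Shatters C B}, (B.card : ℕ∞)

lemma card_le_vcDim {X : Type*} {C : Set (X → Bool)} {B : Finset X} (h : Shatters C B) :
    (B.card : ℕ∞) ≤ vcDim C :=
  le_iSup₂ (f := fun (B : Finset X) (_ : B ∈ {B : Finset X | Shatters C B}) => (B.card : ℕ∞)) B h

theorem stmt_2 {X : Type*} (C : Set (X → Bool)) :
    vcDim C ≤ vcDim {f : X × Bool → Bool | ∃ c ∈ C, f = fun p => xor p.2 (c p.1)} ∧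
    vcDim {f : X × Bool → Bool | ∃ c ∈ C, f = fun p => xor p.2 (c p.1)} ≤ 2 * vcDim C := by
  classical
  constructor
  · refine iSup₂_le fun B hB => ?_
    have hB' : Shatters {f : X × Bool → Bool | ∃ c ∈ C, f = fun p => xor p.2 (c p.1)}
        (B.image (fun x => (x, false))) := by
      intro g
      obtain ⟨c, hc, hcg⟩ := hB (fun x => g (x, false))
      refine ⟨_, ⟨c, hc, rfl⟩, ?_⟩
      intro p hp
      simp only [Finset.mem_image] at hp
      obtain ⟨x, hx, rfl⟩ := hp
      simpa using hcg x hx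
    calc (B.card : ℕ∞) = ((B.image (fun x => (x, false))).card : ℕ∞) := by
          rw [Finset.card_image_of_injective _ (fun a b h => by simpa using h)]
      _ ≤ _ := card_le_vcDim hB'
  · refine iSup₂_le fun B hB => ?_
    set B' := B.image Prod.fst with hB'def
    have hB' : Shatters C B' := by
      intro g
      obtain ⟨f, ⟨c, hc, rfl⟩, hfg⟩ := hB (fun p => xor p.2 (g p.1))
      refine ⟨c, hc, ?_⟩
      intro x hx
      simp only [hB'def, Finset.mem_image] at hx
      obtain ⟨p, hp, rfl⟩ := hx
      have := hfg p hp
      cases hp2 : p.2 <;> simp [hp2] at this <;> simp [this]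
    have hsub : B ⊆ B' ×ˢ (Finset.univ : Finset Bool) := by
      intro p hp
      exact Finset.mem_product.2 ⟨Finset.mem_image_of_mem _ hp, Finset.mem_univ _⟩
    have h1 : B.card ≤ 2 * B'.card := by
      have := Finset.card_le_card hsub
      simp only [Finset.card_product, Finset.card_univ, Fintype.card_bool] at this
      omega
    calc (B.card : ℕ∞) ≤ 2 * B'.card := by exact_mod_cast h1
      _ ≤ 2 * vcDim C := mul_le_mul_right (card_le_vcDim hB') 2
end

section
/- With L(S,·) as above, let q(S,j) = min( L(S,j) − (1−α)r , r − L(S,j+1) ) for 0 ≤ j ≤ log(T'). Then q(S,·) is quasi-concave: for every i ≤ ℓ ≤ j, q(S,ℓ) ≥ min{q(S,i), q(S,j)}. (This holds regardless of whether Q(S,·) itself is quasi-concave.) -/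
/-- `Lfun T' Q j` is the maximum, over intervals `[a, a + 2^j - 1] ⊆ [0, T']`,
of the minimum of `Q` over the interval. -/
noncomputable def Lfun (T' : ℕ) (Q : ℕ → ℝ) (j : ℕ) : ℝ :=
  ⨆ a : {a : ℕ // a + 2 ^ j ≤ T' + 1}, ⨅ i : Finset.Icc (a : ℕ) ((a : ℕ) + 2 ^ j - 1), Q i.1

/-- `L` extended to `j = log(T') + 1` by `min 0 (L (log T'))`, where `T' = 2 ^ t`. -/
noncomputable def Lext (t : ℕ) (Q : ℕ → ℝ) (j : ℕ) : ℝ :=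
  if j ≤ t then Lfun (2 ^ t) Q j else min 0 (Lfun (2 ^ t) Q t)

/-- The quality function `q(S,j) = min (L(S,j) - (1-α)r, r - L(S,j+1))`. -/
noncomputable def qfun (t : ℕ) (Q : ℕ → ℝ) (α r : ℝ) (j : ℕ) : ℝ :=
  min (Lext t Q j - (1 - α) * r) (r - Lext t Q (j + 1))

instance finA (T' k : ℕ) : Finite {a : ℕ // a + 2 ^ k ≤ T' + 1} := by
  apply Set.Finite.to_subtype (s := {a : ℕ | a + 2 ^ k ≤ T' + 1})
  apply (Set.finite_Iic (T' + 1)).subset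
  intro a ha
  have : 1 ≤ 2 ^ k := Nat.one_le_two_pow
  simp only [Set.mem_setOf_eq] at ha
  simp only [Set.mem_Iic]
  omega

lemma Lfun_anti (T' : ℕ) (Q : ℕ → ℝ) {j j' : ℕ} (h : j ≤ j') (h' : 2 ^ j' ≤ T' + 1) :
    Lfun T' Q j' ≤ Lfun T' Q j := by
  have hne : Nonempty {a : ℕ // a + 2 ^ j' ≤ T' + 1} := ⟨⟨0, by omega⟩⟩
  apply ciSup_le
  intro a
  have hle : 2 ^ j ≤ 2 ^ j' := Nat.pow_le_pow_right (by norm_num) h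
  have ha' : (a : ℕ) + 2 ^ j ≤ T' + 1 := le_trans (by omega) a.2
  have key : (⨅ i : Finset.Icc (a : ℕ) ((a : ℕ) + 2 ^ j' - 1), Q i.1) ≤
      ⨅ i : Finset.Icc (a : ℕ) ((a : ℕ) + 2 ^ j - 1), Q i.1 := by
    have hbdd : BddBelow (Set.range fun i : Finset.Icc (a : ℕ) ((a : ℕ) + 2 ^ j' - 1) => Q i.1) :=
      (Set.finite_range _).bddBelow
    have hne2 : Nonempty (Finset.Icc (a : ℕ) ((a : ℕ) + 2 ^ j - 1)) := by
      refine ⟨⟨(a : ℕ), ?_⟩⟩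
      simp only [Finset.mem_Icc]
      have : 1 ≤ 2 ^ j := Nat.one_le_two_pow
      omega
    apply le_ciInf
    intro i
    have hm : i.1 ∈ Finset.Icc (a : ℕ) ((a : ℕ) + 2 ^ j' - 1) := by
      have := i.2
      simp only [Finset.mem_Icc] at this ⊢
      have : (a : ℕ) ≤ i.1 ∧ i.1 ≤ (a : ℕ) + 2 ^ j - 1 := this
      have h1 : 1 ≤ 2 ^ j := Nat.one_le_two_pow
      omega
    exact ciInf_le hbdd ⟨i.1, hm⟩
  refine le_trans key ?_
  have hbdd2 : BddAbove (Set.range fun a : {a : ℕ // a + 2 ^ j ≤ T' + 1} =>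
      ⨅ i : Finset.Icc (a : ℕ) ((a : ℕ) + 2 ^ j - 1), Q i.1) :=
    (Set.finite_range _).bddAbove
  exact le_ciSup hbdd2 ⟨(a : ℕ), ha'⟩

lemma Lext_anti (t : ℕ) (Q : ℕ → ℝ) {j j' : ℕ} (h : j ≤ j') (h' : j' ≤ t + 1) :
    Lext t Q j' ≤ Lext t Q j := by
  unfold Lext
  by_cases hj' : j' ≤ t
  · rw [if_pos hj', if_pos (le_trans h hj')]
    exact Lfun_anti _ Q h (by
      have : 2 ^ j' ≤ 2 ^ t := Nat.pow_le_pow_right (by norm_num) hj'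
      omega)
  · rw [if_neg hj']
    by_cases hj : j ≤ t
    · rw [if_pos hj]
      exact le_trans (min_le_right _ _) (Lfun_anti _ Q hj (by omega))
    · rw [if_neg hj]

theorem stmt_4 (t : ℕ) (Q : ℕ → ℝ) (α r : ℝ) (hα : 0 < α) (hα1 : α < 1)
    (i ℓ j : ℕ) (hiℓ : i ≤ ℓ) (hℓj : ℓ ≤ j) (hj : j ≤ t) :
    min (qfun t Q α r i) (qfun t Q α r j) ≤ qfun t Q α r ℓ := by
  have h1 : Lext t Q j ≤ Lext t Q ℓ := Lext_anti t Q hℓj (by omega)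
  have h2 : Lext t Q (ℓ + 1) ≤ Lext t Q (i + 1) := Lext_anti t Q (by omega) (by omega)
  unfold qfun
  refine le_min ?_ ?_
  · exact le_trans (min_le_right _ _) (le_trans (min_le_left _ _) (by linarith))
  · exact le_trans (min_le_left _ _) (le_trans (min_le_right _ _) (by linarith))
end

section
/- Let S be a sample labeled by a threshold concept c_j (c_j(x) = 1 iff x < j), and define Q(S,k) = the number of sample points correctly classified by the threshold concept c_k. Then Q(S,·) is quasi-concave: for all u ≤ v ≤ w, Q(S,v) ≥ min{Q(S,u), Q(S,w)}. -/
theorem stmt_6 (d m : ℕ) (j : ℕ) (hj : j ≤ 2 ^ d) (x : Fin m → ℕ) (y : Fin m → Bool)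
    (hx : ∀ i, x i < 2 ^ d) (hy : ∀ i, y i = decide (x i < j))
    (Q : ℕ → ℕ)
    (hQ : ∀ k, Q k = (Finset.univ.filter fun i => decide (x i < k) = y i).card)
    (u v w : ℕ) (huv : u ≤ v) (hvw : v ≤ w) (hw : w ≤ 2 ^ d) :
    min (Q u) (Q w) ≤ Q v := by
  have hset : ∀ a b : ℕ, (a ≤ b ∧ b ≤ j) ∨ (j ≤ b ∧ b ≤ a) → Q a ≤ Q b := by
    intro a b hab
    rw [hQ, hQ]
    apply Finset.card_le_card
    intro i hi
    simp only [Finset.mem_filter, Finset.mem_univ, true_and, hy i,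
      decide_eq_decide] at hi ⊢
    rcases hab with ⟨h1, h2⟩ | ⟨h1, h2⟩ <;> omega
  rcases le_or_gt v j with h | h
  · exact le_trans (min_le_left _ _) (hset u v (Or.inl ⟨huv, h⟩))
  · exact le_trans (min_le_right _ _) (hset w v (Or.inr ⟨h.le, hvw⟩))
end

section
/- Greedy packing bound for k-point concepts: if 2^d ≥ k^{1.1} (and k ≥ 1), there exists a family B of k-element subsets of a domain of size 2^d, none containing a fixed distinguished element, such that any two distinct members of B intersect in at most k/2 elements, and |B| ≥ ((2^d − 1)/(4e²k))^{k/2}. -/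
private lemma choose_le_two_pow' (k m : ℕ) : k.choose m ≤ 2 ^ k := by
  rcases le_or_gt m k with h | h
  · calc k.choose m ≤ ∑ i ∈ Finset.range (k+1), k.choose i :=
        Finset.single_le_sum (f := fun i => k.choose i) (fun i _ => Nat.zero_le _)
          (Finset.mem_range.2 (Nat.lt_succ_of_le h))
    _ = 2 ^ k := Nat.sum_range_choose k
  · rw [Nat.choose_eq_zero_of_lt h]; exact Nat.zero_le _

private lemma choose_ratio (N k : ℕ) (hk : k ≤ N) :
    ∀ m ≤ k, N.choose (k - m) * (N - k + 1) ^ m ≤ N.choose k * k ^ m := by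
  intro m
  induction m with
  | zero => simp
  | succ m ih =>
    intro hm
    have hm' : m ≤ k := le_of_lt hm
    have ih' := ih hm'
    set j := k - (m + 1) with hj
    have hj1 : j + 1 = k - m := by omega
    have key : N.choose j * (N - j) = N.choose (j + 1) * (j + 1) :=
      (Nat.choose_succ_right_eq N j).symm
    have h1 : N.choose j * (N - k + 1) ≤ N.choose (j + 1) * k := by
      calc N.choose j * (N - k + 1) ≤ N.choose j * (N - j) :=
            Nat.mul_le_mul_left _ (by omega)
        _ = N.choose (j + 1) * (j + 1) := key
        _ ≤ N.choose (j + 1) * k := Nat.mul_le_mul_left _ (by omega)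
    calc N.choose j * (N - k + 1) ^ (m + 1)
        = (N.choose j * (N - k + 1)) * (N - k + 1) ^ m := by ring
      _ ≤ (N.choose (j + 1) * k) * (N - k + 1) ^ m := Nat.mul_le_mul_right _ h1
      _ = k * (N.choose (k - m) * (N - k + 1) ^ m) := by rw [hj1]; ring
      _ ≤ k * (N.choose k * k ^ m) := Nat.mul_le_mul_left _ ih'
      _ = N.choose k * k ^ (m + 1) := by ring

set_option maxHeartbeats 1600000 in
theorem stmt_15 (d k : ℕ) (hk : 1 ≤ k) {X : Type*} [Fintype X] [DecidableEq X]
    (hX : Fintype.card X = 2 ^ d) (x₀ : X)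
    (hd : ((k : ℝ)) ^ (1.1 : ℝ) ≤ (2 : ℝ) ^ d) :
    ∃ B : Finset (Finset X),
      (∀ A ∈ B, A.card = k ∧ x₀ ∉ A) ∧
      (∀ A₁ ∈ B, ∀ A₂ ∈ B, A₁ ≠ A₂ → ((A₁ ∩ A₂).card : ℝ) ≤ (k : ℝ) / 2) ∧
      (((2 : ℝ) ^ d - 1) / (4 * Real.exp 1 ^ 2 * k)) ^ ((k : ℝ) / 2) ≤ (B.card : ℝ) := by
  classical
  set e := Real.exp 1 with he
  have he2 : (2 : ℝ) ≤ e := by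
    have := Real.exp_one_gt_d9; rw [he]; nlinarith
  have hkpos : (0 : ℝ) < k := by exact_mod_cast hk
  set t : ℝ := ((2 : ℝ) ^ d - 1) / (4 * e ^ 2 * k) with ht
  have hden : (0 : ℝ) < 4 * e ^ 2 * k := by positivity
  have h2d1 : (1 : ℝ) ≤ (2 : ℝ) ^ d := one_le_pow₀ (by norm_num)
  have ht0 : 0 ≤ t := div_nonneg (by linarith) hden.le
  -- the ambient set
  set U : Finset X := Finset.univ.erase x₀ with hU
  have hUcard : U.card = 2 ^ d - 1 := by
    rw [hU, Finset.card_erase_of_mem (Finset.mem_univ _), Finset.card_univ, hX]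
  set N : ℕ := 2 ^ d - 1 with hN
  have hNcast : (N : ℝ) = (2 : ℝ) ^ d - 1 := by
    have : (1:ℕ) ≤ 2 ^ d := Nat.one_le_two_pow
    push_cast [hN, Nat.cast_sub this]; norm_num
  -- N ≥ k unless 2^d = 1
  by_cases hdeg : 2 ^ d = 1
  · -- degenerate: k = 1, N = 0, bound is 0
    refine ⟨∅, by simp, by simp, ?_⟩
    have h2 : ((2 : ℝ) ^ d) = 1 := by exact_mod_cast congrArg (Nat.cast (R := ℝ)) hdeg
    have ht' : t = 0 := by rw [ht, h2]; simp
    rw [ht', Real.zero_rpow (by positivity)]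
    simp
  have h2d2 : (2 : ℕ) ≤ 2 ^ d := by
    have := Nat.one_le_two_pow (n := d); omega
  have hkN : k ≤ N := by
    rcases eq_or_lt_of_le hk with h1 | h1
    · omega
    · have hk1 : (1 : ℝ) < k := by exact_mod_cast h1
      have : (k : ℝ) < (k : ℝ) ^ (1.1 : ℝ) := by
        nth_rewrite 1 [← Real.rpow_one (k : ℝ)]
        exact Real.rpow_lt_rpow_of_exponent_lt hk1 (by norm_num)
      have hklt : (k : ℝ) < (2 : ℝ) ^ d := lt_of_lt_of_le this hd
      have : k < 2 ^ d := by exact_mod_cast (by push_cast; exact hklt : (k:ℝ) < ((2^d : ℕ) : ℝ))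
      omega
  -- there is at least one k-subset of U
  obtain ⟨A₀, hA₀U, hA₀card⟩ := Finset.exists_subset_card_eq (show k ≤ U.card by omega)
  by_cases htriv : t ≤ 1
  · -- trivial case: RHS ≤ 1, take a singleton
    refine ⟨{A₀}, ?_, ?_, ?_⟩
    · intro A hA; rw [Finset.mem_singleton] at hA; subst hA
      exact ⟨hA₀card, fun hx => (Finset.mem_erase.1 (hA₀U hx)).1 rfl⟩
    · intro A₁ h₁ A₂ h₂ hne
      rw [Finset.mem_singleton] at h₁ h₂; exact absurd (h₁.trans h₂.symm) hne
    · rw [Finset.card_singleton]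
      push_cast
      exact (Real.rpow_le_one ht0 htriv (by positivity)).trans (le_refl 1)
  push_neg at htriv
  -- main case: t > 1, i.e. N > 4e²k
  have hNbig : 4 * e ^ 2 * k < (N : ℝ) := by
    rw [hNcast]
    have := (one_lt_div hden).1 htriv
    linarith
  set m : ℕ := k / 2 + 1 with hm
  have hmk : m ≤ k := by omega
  have h2m : k < 2 * m := by omega
  -- maximal family
  set P : Finset (Finset X) → Prop :=
    fun B => ∀ A₁ ∈ B, ∀ A₂ ∈ B, A₁ ≠ A₂ → 2 * (A₁ ∩ A₂).card ≤ k with hP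
  set K : Finset (Finset X) := U.powersetCard k with hK
  have hKcard : K.card = N.choose k := by rw [hK, Finset.card_powersetCard, hUcard]
  set S : Finset (Finset (Finset X)) := K.powerset.filter P with hS
  have hSne : S.Nonempty := ⟨∅, by simp [hS, hP]⟩
  obtain ⟨B, hBS, hBmax⟩ := S.exists_maximal hSne
  rw [hS, Finset.mem_filter, Finset.mem_powerset] at hBS
  obtain ⟨hBK, hBP⟩ := hBS
  have hmemK : ∀ A ∈ K, A ⊆ U ∧ A.card = k := by
    intro A hA; rw [hK, Finset.mem_powersetCard] at hA; exact hA
  -- covering property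
  have hcover : ∀ A ∈ K, ∃ A₁ ∈ B, k < 2 * (A ∩ A₁).card := by
    intro A hA
    by_contra hcon
    push_neg at hcon
    have hAB : A ∉ B := by
      intro hAB
      have := hcon A hAB
      rw [Finset.inter_self, (hmemK A hA).2] at this
      omega
    have hBS' : insert A B ∈ S := by
      rw [hS, Finset.mem_filter, Finset.mem_powerset]
      constructor
      · exact Finset.insert_subset hA hBK
      · intro A₁ h₁ A₂ h₂ hne
        rw [Finset.mem_insert] at h₁ h₂
        rcases h₁ with rfl | h₁ <;> rcases h₂ with rfl | h₂
        · exact absurd rfl hne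
        · have := hcon A₂ h₂; omega
        · have := hcon A₁ h₁; rw [Finset.inter_comm]; omega
        · exact hBP A₁ h₁ A₂ h₂ hne
    exact (Finset.ssubset_insert hAB).2 (hBmax hBS' (Finset.ssubset_insert hAB).1)
  -- counting
  set cov : Finset X → Finset (Finset X) :=
    fun A₁ => K.filter (fun A => k < 2 * (A ∩ A₁).card) with hcov'
  have hsub : K ⊆ B.biUnion cov := by
    intro A hA
    obtain ⟨A₁, hA₁, hlt⟩ := hcover A hA
    exact Finset.mem_biUnion.2 ⟨A₁, hA₁, Finset.mem_filter.2 ⟨hA, hlt⟩⟩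
  have hcovcard : ∀ A₁ ∈ B, (cov A₁).card ≤ k.choose m * N.choose (k - m) := by
    intro A₁ hA₁B
    have hA₁K := hmemK A₁ (hBK hA₁B)
    have himg : cov A₁ ⊆
        ((A₁.powersetCard m ×ˢ U.powersetCard (k - m)).image fun p => p.1 ∪ p.2) := by
      intro A hA
      rw [hcov', Finset.mem_filter] at hA
      obtain ⟨hAK, hlt⟩ := hA
      obtain ⟨hAU, hAcard⟩ := hmemK A hAK
      have hint : m ≤ (A ∩ A₁).card := by omega
      obtain ⟨sS, hSsub, hScard⟩ := Finset.exists_subset_card_eq hint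
      have hSA : sS ⊆ A := hSsub.trans (Finset.inter_subset_left)
      refine Finset.mem_image.2 ⟨(sS, A \ sS), ?_, ?_⟩
      · rw [Finset.mem_product, Finset.mem_powersetCard, Finset.mem_powersetCard]
        refine ⟨⟨hSsub.trans Finset.inter_subset_right, hScard⟩,
          ⟨(Finset.sdiff_subset).trans hAU, ?_⟩⟩
        rw [Finset.card_sdiff_of_subset hSA, hAcard, hScard]
      · simp only
        rw [Finset.union_sdiff_of_subset hSA]
    calc (cov A₁).card ≤ _ := Finset.card_le_card himg
      _ ≤ (A₁.powersetCard m ×ˢ U.powersetCard (k - m)).card := Finset.card_image_le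
      _ = k.choose m * N.choose (k - m) := by
          rw [Finset.card_product, Finset.card_powersetCard, Finset.card_powersetCard,
            hA₁K.2, hUcard]
  have hmain : N.choose k ≤ B.card * (k.choose m * N.choose (k - m)) := by
    calc N.choose k = K.card := hKcard.symm
      _ ≤ (B.biUnion cov).card := Finset.card_le_card hsub
      _ ≤ ∑ A₁ ∈ B, (cov A₁).card := Finset.card_biUnion_le
      _ ≤ ∑ _A₁ ∈ B, k.choose m * N.choose (k - m) := Finset.sum_le_sum hcovcard
      _ = B.card * (k.choose m * N.choose (k - m)) := by rw [Finset.sum_const, smul_eq_mul]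
  -- ℕ inequality: (N - k + 1)^m ≤ B.card * (4k)^m
  have hratio := choose_ratio N k hkN m hmk
  have hchoosepos : 0 < N.choose (k - m) := Nat.choose_pos (by omega)
  have h4 : k.choose m ≤ 4 ^ m := by
    calc k.choose m ≤ 2 ^ k := choose_le_two_pow' k m
      _ ≤ 2 ^ (2 * m) := Nat.pow_le_pow_right (by norm_num) (by omega)
      _ = 4 ^ m := by rw [pow_mul]; norm_num
  have hnat : (N - k + 1) ^ m ≤ B.card * (4 * k) ^ m := by
    have h1 : N.choose (k - m) * (N - k + 1) ^ m ≤
        N.choose (k - m) * (B.card * (4 * k) ^ m) := by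
      calc N.choose (k - m) * (N - k + 1) ^ m ≤ N.choose k * k ^ m := hratio
        _ ≤ (B.card * (k.choose m * N.choose (k - m))) * k ^ m :=
            Nat.mul_le_mul_right _ hmain
        _ ≤ (B.card * (4 ^ m * N.choose (k - m))) * k ^ m := by
            exact Nat.mul_le_mul_right _ (Nat.mul_le_mul_left _ (Nat.mul_le_mul_right _ h4))
        _ = N.choose (k - m) * (B.card * (4 * k) ^ m) := by rw [mul_pow]; ring
    exact Nat.le_of_mul_le_mul_left h1 hchoosepos
  -- move to ℝ
  have hNk1 : ((N - k + 1 : ℕ) : ℝ) = (N : ℝ) - k + 1 := by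
    push_cast [Nat.cast_sub hkN]; ring
  have hreal : ((N : ℝ) - k + 1) ^ m ≤ (B.card : ℝ) * (4 * k) ^ m := by
    have h' : (((N - k + 1) ^ m : ℕ) : ℝ) ≤ ((B.card * (4 * k) ^ m : ℕ) : ℝ) := by
      exact_mod_cast hnat
    push_cast [Nat.cast_sub hkN] at h'
    exact h'
  have h4kpos : (0 : ℝ) < (4 * k : ℝ) ^ m := by positivity
  have hBge : ((N : ℝ) - k + 1) ^ m / (4 * k) ^ m ≤ (B.card : ℝ) := by
    rw [div_le_iff₀ h4kpos]; exact hreal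
  -- t ≤ (N - k + 1)/(4k)
  have htb : t ≤ ((N : ℝ) - k + 1) / (4 * k) := by
    rw [ht, hNcast.symm, div_le_div_iff₀ hden (by positivity)]
    -- N * (4k) ≤ (N - k + 1) * (4 e² k)
    have h1 : e ^ 2 * k ≤ (N : ℝ) / 4 := by nlinarith
    have hN0 : (0 : ℝ) ≤ N := Nat.cast_nonneg N
    have he4 : (4 : ℝ) ≤ e ^ 2 := by nlinarith
    have hNt : (N : ℝ) ≤ e ^ 2 * ((N : ℝ) - k + 1) := by
      nlinarith [mul_nonneg (by linarith : (0:ℝ) ≤ e ^ 2 - 4) hN0]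
    nlinarith [mul_le_mul_of_nonneg_left hNt (by positivity : (0:ℝ) ≤ 4 * (k:ℝ))]
  -- conclude
  refine ⟨B, ?_, ?_, ?_⟩
  · intro A hA
    obtain ⟨hAU, hAcard⟩ := hmemK A (hBK hA)
    exact ⟨hAcard, fun hx => (Finset.mem_erase.1 (hAU hx)).1 rfl⟩
  · intro A₁ h₁ A₂ h₂ hne
    have := hBP A₁ h₁ A₂ h₂ hne
    rw [le_div_iff₀ (by norm_num : (0:ℝ) < 2)]
    exact_mod_cast by omega
  · have ht1 : (1 : ℝ) ≤ t := le_of_lt htriv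
    calc t ^ ((k : ℝ) / 2) ≤ t ^ ((m : ℕ) : ℝ) := by
          apply Real.rpow_le_rpow_of_exponent_le ht1
          have hkm : (k : ℝ) ≤ 2 * (m : ℝ) := by exact_mod_cast h2m.le
          rw [div_le_iff₀ (by norm_num : (0:ℝ) < 2)]
          linarith
      _ = t ^ m := Real.rpow_natCast t m
      _ ≤ (((N : ℝ) - k + 1) / (4 * k)) ^ m := pow_le_pow_left₀ ht0 htb m
      _ = ((N : ℝ) - k + 1) ^ m / (4 * k) ^ m := div_pow _ _ m
      _ ≤ (B.card : ℝ) := hBge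
end

section
/- Exponential mechanism utility: let q be a sensitivity-1 quality function, S a database of size m, H a finite solution set, and let ê = max_{f∈H} q(S,f). The exponential mechanism, which outputs h ∈ H with probability proportional to exp(ε·q(S,h)/2), outputs a solution h with q(S,h) ≤ ê − Δm with probability at most |H|·exp(−εΔm/2). -/
open scoped Classical

theorem stmt_17 {F : Type*} (H : Finset F) (hH : H.Nonempty)
    (q : F → ℝ) (ε Δ m : ℝ) (hε : 0 < ε) (hΔ : 0 < Δ) (hm : 0 < m) :
    (∑ h ∈ H.filter fun h => q h ≤ H.sup' hH q - Δ * m, Real.exp (ε * q h / 2)) /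
      (∑ f ∈ H, Real.exp (ε * q f / 2)) ≤
      (H.card : ℝ) * Real.exp (-(ε * Δ * m / 2)) := by
  set Q := H.sup' hH q with hQdef
  obtain ⟨f0, hf0, hqf0⟩ := H.exists_mem_eq_sup' hH q
  have hD : Real.exp (ε * Q / 2) ≤ ∑ f ∈ H, Real.exp (ε * q f / 2) := by
    have := Finset.single_le_sum (f := fun f => Real.exp (ε * q f / 2))
      (fun f _ => (Real.exp_pos _).le) hf0
    simpa [hQdef, hqf0] using this
  have hDpos : 0 < ∑ f ∈ H, Real.exp (ε * q f / 2) :=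
    lt_of_lt_of_le (Real.exp_pos _) hD
  rw [div_le_iff₀ hDpos]
  have hnum : (∑ h ∈ H.filter fun h => q h ≤ Q - Δ * m, Real.exp (ε * q h / 2))
      ≤ (H.card : ℝ) * Real.exp (ε * (Q - Δ * m) / 2) := by
    calc (∑ h ∈ H.filter fun h => q h ≤ Q - Δ * m, Real.exp (ε * q h / 2))
        ≤ ∑ _h ∈ H.filter fun h => q h ≤ Q - Δ * m, Real.exp (ε * (Q - Δ * m) / 2) := by
          apply Finset.sum_le_sum
          intro h hh
          have := (Finset.mem_filter.mp hh).2
          apply Real.exp_le_exp.mpr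
          have : ε * q h ≤ ε * (Q - Δ * m) := by nlinarith
          linarith
      _ = ((H.filter fun h => q h ≤ Q - Δ * m).card : ℝ) * Real.exp (ε * (Q - Δ * m) / 2) := by
          rw [Finset.sum_const, nsmul_eq_mul]
      _ ≤ (H.card : ℝ) * Real.exp (ε * (Q - Δ * m) / 2) := by
          apply mul_le_mul_of_nonneg_right _ (Real.exp_pos _).le
          exact_mod_cast Finset.card_filter_le _ _
  calc (∑ h ∈ H.filter fun h => q h ≤ Q - Δ * m, Real.exp (ε * q h / 2))
      ≤ (H.card : ℝ) * Real.exp (ε * (Q - Δ * m) / 2) := hnum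
    _ = (H.card : ℝ) * Real.exp (-(ε * Δ * m / 2)) * Real.exp (ε * Q / 2) := by
        rw [mul_assoc, ← Real.exp_add]; ring_nf
    _ ≤ (H.card : ℝ) * Real.exp (-(ε * Δ * m / 2)) * ∑ f ∈ H, Real.exp (ε * q f / 2) := by
        apply mul_le_mul_of_nonneg_left hD
        positivity
end
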